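/- In the lexicographic product ℤ ×_lex ℤ, every strongly decreasing sequence is trivial: if (x_i) satisfies that for each i there is n_i ≥ 4 with n_i · x_{i+1} ≥ x_i ≥ 2 · x_{i+1}, then x_i = (0,0) for all i. Moreover, ℤ ×_lex ℤ does contain a strictly decreasing sequence of positive elements, namely (1, -i) for i ∈ ℕ. -/

import Mathlib

/-- Key integer lemma: a strongly decreasing sequence in ℤ is identically 0. -/
lemma int_sd_zero (y : ℕ → ℤ)
    (h : ∀ i, ∃ n : ℕ, 4 ≤ n ∧ y i ≤ n * y (i + 1) ∧ 2 * y (i + 1) ≤ y i) :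
    ∀ i, y i = 0 := by
  have hnn : ∀ i, 0 ≤ y (i + 1) := by
    intro i
    obtain ⟨n, hn, h1, h2⟩ := h i
    nlinarith [h1, h2, hn]
  have hpow : ∀ i k, 2 ^ k * y (i + k) ≤ y i := by
    intro i k
    induction k with
    | zero => simp
    | succ k ih =>
      obtain ⟨n, hn, h1, h2⟩ := h (i + k)
      have h2' := h2
      have := hnn (i + k)
      show 2 ^ (k + 1) * y (i + k + 1) ≤ y i
      calc 2 ^ (k + 1) * y (i + k + 1) = 2 ^ k * (2 * y (i + k + 1)) := by ring
        _ ≤ 2 ^ k * y (i + k) := by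
              apply mul_le_mul_of_nonneg_left h2 (by positivity)
        _ ≤ y i := ih
  have hzero_back : ∀ j i, y (i + j) = 0 → y i = 0 := by
    intro j
    induction j with
    | zero => intro i hi; simpa using hi
    | succ j ih =>
      intro i hi
      have h1 : y (i + 1) = 0 := by
        apply ih
        rw [show i + 1 + j = i + (j + 1) by ring]; exact hi
      obtain ⟨n, hn, hle, hge⟩ := h i
      rw [h1] at hle hge
      omega
  intro i
  -- get nonnegativity at all indices
  have hnn0 : 0 ≤ y i := by
    obtain ⟨n, hn, h1, h2⟩ := h i
    nlinarith [hnn i, h2]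
  set k : ℕ := (y i).toNat + 1 with hk
  have hlt : y i < 2 ^ k := by
    have : (y i) < ((y i).toNat : ℤ) + 1 := by omega
    calc y i < ((y i).toNat : ℤ) + 1 := this
      _ ≤ 2 ^ k := by
          have h1 : (y i).toNat < 2 ^ ((y i).toNat) := (y i).toNat.lt_two_pow_self
          have h2 : 2 ^ ((y i).toNat) ≤ 2 ^ k := Nat.pow_le_pow_right (by norm_num) (by omega)
          have h3 : (y i).toNat + 1 ≤ 2 ^ k := h1.trans_le h2
          exact_mod_cast h3
  have hzk : y (i + k) = 0 := by
    by_contra hne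
    have hpos : 1 ≤ y (i + k) := by
      have h0 : 0 ≤ y (i + k) := by
        rw [hk, ← Nat.add_assoc]; exact hnn _
      omega
    have := hpow i k
    nlinarith [this, hpos, hlt]
  exact hzero_back k i hzk

theorem zlex_strongly_decreasing_trivial :
    (∀ x : ℕ → Lex (ℤ × ℤ),
      (∀ i, ∃ n : ℕ, 4 ≤ n ∧ x i ≤ n • x (i + 1) ∧ 2 • x (i + 1) ≤ x i) →
      ∀ i, x i = 0) ∧
    (∀ i : ℕ, 0 < toLex ((1 : ℤ), -(i : ℤ)) ∧
      toLex ((1 : ℤ), -((i : ℤ) + 1)) < toLex ((1 : ℤ), -(i : ℤ))) := by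
  constructor
  · intro x hx
    set a : ℕ → ℤ := fun i => (ofLex (x i)).1 with ha
    set b : ℕ → ℤ := fun i => (ofLex (x i)).2 with hb
    have hxeq : ∀ i, x i = toLex (a i, b i) := by intro i; rfl
    have hle : ∀ i, ∃ n : ℕ, 4 ≤ n ∧
        (toLex (a i, b i) ≤ toLex ((n : ℤ) * a (i+1), (n : ℤ) * b (i+1))) ∧
        (toLex ((2 : ℤ) * a (i+1), (2 : ℤ) * b (i+1)) ≤ toLex (a i, b i)) := by
      intro i
      obtain ⟨n, hn, h1, h2⟩ := hx i
      refine ⟨n, hn, ?_, ?_⟩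
      · convert h1 using 1 <;> rfl
      · convert h2 using 1 <;> rfl
    have haz : ∀ i, a i = 0 := by
      apply int_sd_zero
      intro i
      obtain ⟨n, hn, h1, h2⟩ := hle i
      rw [Prod.Lex.le_iff] at h1 h2
      refine ⟨n, hn, ?_, ?_⟩
      · rcases h1 with h | ⟨h, _⟩ <;> simp at h ⊢ <;> omega
      · rcases h2 with h | ⟨h, _⟩ <;> simp at h ⊢ <;> omega
    have hbz : ∀ i, b i = 0 := by
      apply int_sd_zero
      intro i
      obtain ⟨n, hn, h1, h2⟩ := hle i
      rw [Prod.Lex.le_iff] at h1 h2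
      refine ⟨n, hn, ?_, ?_⟩
      · rcases h1 with h | ⟨_, h⟩
        · exfalso; simp [haz] at h
        · exact h
      · rcases h2 with h | ⟨_, h⟩
        · exfalso; simp [haz] at h
        · exact h
    intro i
    rw [hxeq i, haz i, hbz i]; rfl
  · intro i
    constructor
    · show toLex ((0:ℤ), (0:ℤ)) < _
      rw [Prod.Lex.lt_iff]
      left; norm_num
    · rw [Prod.Lex.lt_iff]
      right
      refine ⟨rfl, ?_⟩
      show -((i:ℤ)+1) < -(i:ℤ)
      linarith
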